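/- Let N ≥ 2 and let ℒ : ℝ^{N×D} → ℝ be differentiable. Define the batch-normalization standardization map X ↦ Z(X) by R = X − (1_N·1_Nᵀ/N)·X, Σ_j = (1/N)·Σ_{i=1}^{N} R_{ij}² for 1 ≤ j ≤ D, and Z(X)_{ij} = Σ_j^{−1/2}·R_{ij}. Then at every X ∈ ℝ^{N×D} for which Σ_j > 0 for all j, the gradient of ℒ∘Z at X, written DX, satisfies DX = ((1/N)·1_N·Σ^{−1/2}) ⊙ ((N·I_N − 1_N·1_Nᵀ)·DZ − Z ⊙ (1_N·diag(Zᵀ·DZ)ᵀ)), where Z = Z(X) and DZ = ∇ℒ(Z(X)); equivalently, entrywise, DX_{ij} = (Σ_j^{−1/2}/N)·(N·DZ_{ij} − Σ_{n=1}^{N} DZ_{nj} − Z_{ij}·Σ_{n=1}^{N} Z_{nj}·DZ_{nj}). -/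

import Mathlib

/-- The batch-normalization standardization map: `R = X − (1_N·1_Nᵀ/N)·X`,
`Σ_j = (1/N)·∑_i R_{ij}²`, `Z(X)_{ij} = Σ_j^{−1/2}·R_{ij}`. -/
noncomputable def bnStandardize {N D : ℕ} (X : Fin N → Fin D → ℝ) :
    Fin N → Fin D → ℝ :=
  fun i j =>
    (((∑ n, (X n j - (∑ m, X m j) / N) ^ 2) / N) ^ (-(1 : ℝ) / 2)) *
      (X i j - (∑ m, X m j) / N)

/-- Backpropagation through batch-normalization standardization: writing
`Z = Z(X)` and `DZ = ∇ℒ(Z(X))`, the gradient `DX` of `ℒ∘Z` at `X` satisfies,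
entrywise, `DX_{ij} = (Σ_j^{−1/2}/N)·(N·DZ_{ij} − ∑_n DZ_{nj} − Z_{ij}·∑_n Z_{nj}·DZ_{nj})`. -/
theorem batchnorm_input_gradient {N D : ℕ} (hN : 2 ≤ N)
    (L : (Fin N → Fin D → ℝ) → ℝ) (hL : Differentiable ℝ L)
    (X : Fin N → Fin D → ℝ)
    (hSigma : ∀ j, 0 < (∑ n, (X n j - (∑ m, X m j) / N) ^ 2) / N)
    (i : Fin N) (j : Fin D) :
    fderiv ℝ (fun X' => L (bnStandardize X')) X (Pi.single i (Pi.single j 1)) =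
      ((((∑ n, (X n j - (∑ m, X m j) / N) ^ 2) / N) ^ (-(1 : ℝ) / 2)) / N) *
        ((N : ℝ) * fderiv ℝ L (bnStandardize X) (Pi.single i (Pi.single j 1)) -
          (∑ n, fderiv ℝ L (bnStandardize X) (Pi.single n (Pi.single j 1))) -
          bnStandardize X i j *
            ∑ n, bnStandardize X n j *
              fderiv ℝ L (bnStandardize X) (Pi.single n (Pi.single j 1))) := by
  classical
  have hNne : (N : ℝ) ≠ 0 := by
    have : 0 < N := by omega
    exact_mod_cast this.ne'
  set E : Fin N → Fin D → ℝ := Pi.single i (Pi.single j 1) with hE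
  -- the directional derivative of each coordinate of `bnStandardize` in direction `E`
  set c : Fin N → Fin D → ℝ := fun n k =>
    if k = j then
      ((∑ m, (X m k - (∑ m', X m' k) / N) ^ 2) / N) ^ (-(1 : ℝ) / 2) *
          ((if n = i then (1 : ℝ) else 0) - 1 / N) -
        ((∑ m, (X m k - (∑ m', X m' k) / N) ^ 2) / N) ^ (-(1 : ℝ) / 2 - 1) *
          (X n k - (∑ m', X m' k) / N) * (X i k - (∑ m', X m' k) / N) / N
    else 0 with hc
  have hsum0 : ∀ k : Fin D, ∑ m, (X m k - (∑ m', X m' k) / N) = 0 := by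
    intro k
    rw [Finset.sum_sub_distrib, Finset.sum_const, Finset.card_univ, Fintype.card_fin, nsmul_eq_mul]
    field_simp
    ring
  have hcoord : ∀ (n : Fin N) (k : Fin D), ∃ d : (Fin N → Fin D → ℝ) →L[ℝ] ℝ,
      HasFDerivAt (fun X' => bnStandardize X' n k) d X ∧ d E = c n k := by
    intro n k
    have he : ∀ m : Fin N, HasFDerivAt (fun X' : Fin N → Fin D → ℝ => X' m k)
        ((ContinuousLinearMap.proj k).comp
          (ContinuousLinearMap.proj (R := ℝ) (φ := fun _ : Fin N => Fin D → ℝ) m)) X :=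
      fun m => ((ContinuousLinearMap.proj k).comp
        (ContinuousLinearMap.proj (R := ℝ) (φ := fun _ : Fin N => Fin D → ℝ) m)).hasFDerivAt
    have hT : HasFDerivAt (fun X' : Fin N → Fin D → ℝ => (∑ m, X' m k) / (N : ℝ))
        ((N : ℝ)⁻¹ • ∑ m, ((ContinuousLinearMap.proj k).comp
          (ContinuousLinearMap.proj (R := ℝ) (φ := fun _ : Fin N => Fin D → ℝ) m))) X := by
      have := (HasFDerivAt.sum (u := Finset.univ) (fun m (_ : m ∈ Finset.univ) => he m)).mul_const ((N : ℝ)⁻¹)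
      simpa [div_eq_mul_inv] using this
    have hR : ∀ m : Fin N, HasFDerivAt
        (fun X' : Fin N → Fin D → ℝ => X' m k - (∑ m', X' m' k) / (N : ℝ))
        (((ContinuousLinearMap.proj k).comp
          (ContinuousLinearMap.proj (R := ℝ) (φ := fun _ : Fin N => Fin D → ℝ) m)) -
          ((N : ℝ)⁻¹ • ∑ m', ((ContinuousLinearMap.proj k).comp
            (ContinuousLinearMap.proj (R := ℝ) (φ := fun _ : Fin N => Fin D → ℝ) m')))) X :=
      fun m => (he m).sub hT
    have hS : HasFDerivAt
        (fun X' : Fin N → Fin D → ℝ => (∑ m, (X' m k - (∑ m', X' m' k) / (N : ℝ)) ^ 2) / (N : ℝ))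
        ((N : ℝ)⁻¹ • ∑ m, ((X m k - (∑ m', X m' k) / (N : ℝ)) •
            (((ContinuousLinearMap.proj k).comp
              (ContinuousLinearMap.proj (R := ℝ) (φ := fun _ : Fin N => Fin D → ℝ) m)) -
              ((N : ℝ)⁻¹ • ∑ m', ((ContinuousLinearMap.proj k).comp
                (ContinuousLinearMap.proj (R := ℝ) (φ := fun _ : Fin N => Fin D → ℝ) m')))) +
          (X m k - (∑ m', X m' k) / (N : ℝ)) •
            (((ContinuousLinearMap.proj k).comp
              (ContinuousLinearMap.proj (R := ℝ) (φ := fun _ : Fin N => Fin D → ℝ) m)) -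
              ((N : ℝ)⁻¹ • ∑ m', ((ContinuousLinearMap.proj k).comp
                (ContinuousLinearMap.proj (R := ℝ) (φ := fun _ : Fin N => Fin D → ℝ) m')))))) X := by
      have := (HasFDerivAt.sum (u := Finset.univ)
        (fun m (_ : m ∈ Finset.univ) => (hR m).mul (hR m))).mul_const ((N : ℝ)⁻¹)
      simpa [div_eq_mul_inv, pow_two] using this
    have hA := hS.rpow_const (p := -(1 : ℝ) / 2) (Or.inl (ne_of_gt (hSigma k)))
    have hf := hA.mul (hR n)
    refine ⟨_, hf, ?_⟩
    by_cases hkj : k = j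
    · subst hkj
      simp only [ContinuousLinearMap.add_apply, ContinuousLinearMap.smul_apply,
        ContinuousLinearMap.sub_apply, ContinuousLinearMap.coe_sum', Finset.sum_apply,
        ContinuousLinearMap.comp_apply, ContinuousLinearMap.proj_apply, hE,
        Pi.single_apply, smul_eq_mul, hc, if_pos rfl,
        apply_ite (fun f : Fin D → ℝ => f k), Pi.zero_apply, mul_sub, mul_ite, mul_one,
        mul_zero, Finset.sum_add_distrib, Finset.sum_sub_distrib, Finset.sum_ite_eq',
        Finset.mem_univ, if_true, ← Finset.sum_mul, hsum0, zero_mul, sub_zero]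
      ring
    · simp only [ContinuousLinearMap.add_apply, ContinuousLinearMap.smul_apply,
        ContinuousLinearMap.sub_apply, ContinuousLinearMap.coe_sum', Finset.sum_apply,
        ContinuousLinearMap.comp_apply, ContinuousLinearMap.proj_apply, hE,
        Pi.single_apply, smul_eq_mul, hc, if_neg hkj,
        apply_ite (fun f : Fin D → ℝ => f k), Pi.zero_apply]
      simp [hkj]
  choose d hd1 hd2 using hcoord
  have hZ' : HasFDerivAt (fun X' => bnStandardize X')
      (ContinuousLinearMap.pi fun n => ContinuousLinearMap.pi fun k => d n k) X :=
    hasFDerivAt_pi.2 fun n => hasFDerivAt_pi.2 fun k => hd1 n k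
  have hcomp : HasFDerivAt (fun X' => L (bnStandardize X'))
      ((fderiv ℝ L (bnStandardize X)).comp
        (ContinuousLinearMap.pi fun n => ContinuousLinearMap.pi fun k => d n k)) X :=
    (hL (bnStandardize X)).hasFDerivAt.comp X hZ'
  rw [hcomp.fderiv]
  have hZDE : (ContinuousLinearMap.pi fun n => ContinuousLinearMap.pi fun k => d n k) E
      = ∑ n, c n j • (Pi.single n (Pi.single j 1) : Fin N → Fin D → ℝ) := by
    refine funext fun n => funext fun k => ?_
    have : ∀ n' : Fin N, (Pi.single n' (Pi.single j 1) : Fin N → Fin D → ℝ) n k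
        = if n = n' then (if k = j then (1:ℝ) else 0) else 0 := by
      intro n'
      simp [Pi.single_apply, apply_ite (fun f : Fin D → ℝ => f k)]
    simp only [ContinuousLinearMap.pi_apply, hd2, Finset.sum_apply, Pi.smul_apply,
      smul_eq_mul, this, mul_ite, mul_one, mul_zero, Finset.sum_ite_eq,
      Finset.mem_univ, if_true]
    by_cases hkj : k = j
    · subst hkj; simp
    · simp [hc, hkj]
  rw [ContinuousLinearMap.comp_apply, hZDE, map_sum]
  simp only [map_smul, smul_eq_mul]
  set DZ : Fin N → ℝ := fun n => fderiv ℝ L (bnStandardize X) (Pi.single n (Pi.single j 1))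
    with hDZ
  have hEDZ : (fderiv ℝ L (bnStandardize X)) E = DZ i := by rw [hDZ, hE]
  rw [hEDZ]
  have hbn : ∀ n, bnStandardize X n j
      = ((∑ m, (X m j - (∑ m', X m' j) / N) ^ 2) / N) ^ (-(1 : ℝ) / 2) *
        (X n j - (∑ m', X m' j) / N) := fun n => rfl
  simp only [hbn]
  have hA3 : ((∑ m, (X m j - (∑ m', X m' j) / N) ^ 2) / N) ^ (-(1 : ℝ) / 2) *
      ((∑ m, (X m j - (∑ m', X m' j) / N) ^ 2) / N) ^ (-(1 : ℝ) / 2) *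
      ((∑ m, (X m j - (∑ m', X m' j) / N) ^ 2) / N) ^ (-(1 : ℝ) / 2)
      = ((∑ m, (X m j - (∑ m', X m' j) / N) ^ 2) / N) ^ (-(1 : ℝ) / 2 - 1) := by
    rw [← Real.rpow_add (hSigma j), ← Real.rpow_add (hSigma j)]
    norm_num
  have hexp : ∀ n, c n j * DZ n
      = ((∑ m, (X m j - (∑ m', X m' j) / N) ^ 2) / N) ^ (-(1 : ℝ) / 2) *
          (if n = i then DZ n else 0)
        - ((∑ m, (X m j - (∑ m', X m' j) / N) ^ 2) / N) ^ (-(1 : ℝ) / 2) / N * DZ n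
        - ((∑ m, (X m j - (∑ m', X m' j) / N) ^ 2) / N) ^ (-(1 : ℝ) / 2 - 1) *
            (X i j - (∑ m', X m' j) / N) / N * ((X n j - (∑ m', X m' j) / N) * DZ n) := by
    intro n
    by_cases h : n = i <;> simp only [hc, if_pos rfl, h, if_true, if_false] <;> ring
  rw [Finset.sum_congr rfl fun n _ => hexp n, Finset.sum_sub_distrib,
    Finset.sum_sub_distrib, ← Finset.mul_sum, ← Finset.mul_sum,
    Finset.sum_ite_eq' Finset.univ i DZ]
  simp only [Finset.mem_univ, if_true]
  have hpull : (∑ n, ((∑ m, (X m j - (∑ m', X m' j) / N) ^ 2) / N) ^ (-(1 : ℝ) / 2) *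
        (X n j - (∑ m', X m' j) / N) * DZ n)
      = ((∑ m, (X m j - (∑ m', X m' j) / N) ^ 2) / N) ^ (-(1 : ℝ) / 2) *
        ∑ n, (X n j - (∑ m', X m' j) / N) * DZ n := by
    rw [Finset.mul_sum]
    exact Finset.sum_congr rfl fun n _ => by ring
  have hpull2 : (∑ n, ((∑ m, (X m j - (∑ m', X m' j) / N) ^ 2) / N) ^ (-(1 : ℝ) / 2 - 1) *
        (X i j - (∑ m', X m' j) / N) / N * ((X n j - (∑ m', X m' j) / N) * DZ n))
      = ((∑ m, (X m j - (∑ m', X m' j) / N) ^ 2) / N) ^ (-(1 : ℝ) / 2 - 1) *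
        (X i j - (∑ m', X m' j) / N) / N *
        ∑ n, (X n j - (∑ m', X m' j) / N) * DZ n := by
    rw [Finset.mul_sum]
  rw [hpull, hpull2]
  have hNN : (N : ℝ) * (N : ℝ)⁻¹ = 1 := mul_inv_cancel₀ hNne
  linear_combination ((X i j - (∑ m', X m' j) / N) / N *
    (∑ n, (X n j - (∑ m', X m' j) / N) * DZ n)) * hA3 -
    (((∑ m, (X m j - (∑ m', X m' j) / N) ^ 2) / N) ^ (-(1 : ℝ) / 2) * DZ i) * hNN
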